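/- Let n > 2 and m > 2 be integers. If the ring 𝕋ₙ(𝔽₂) of n×n upper triangular matrices over 𝔽₂ is m-torsion clean, then m is even. -/

import Mathlib

def AlmostTorsionClean (R : Type*) [Ring R] (m : ℕ) : Prop :=
  ∀ r : R, ∃ u e : R, IsUnit u ∧ u ^ m = 1 ∧ e * e = e ∧ r = u + e

def TorsionClean (R : Type*) [Ring R] (m : ℕ) : Prop :=
  AlmostTorsionClean R m ∧ ∀ k : ℕ, 0 < k → k < m → ¬ AlmostTorsionClean R k

/-- The ring of n×n upper triangular matrices over 𝔽₂, as a subring of the full matrix ring. -/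
def Triangular (n : ℕ) : Subring (Matrix (Fin n) (Fin n) (ZMod 2)) where
  carrier := {A | A.BlockTriangular id}
  zero_mem' := Matrix.blockTriangular_zero
  one_mem' := Matrix.blockTriangular_one
  add_mem' := fun ha hb => ha.add hb
  neg_mem' := fun ha => ha.neg
  mul_mem' := fun ha hb => ha.mul hb

/-- A strictly upper triangular n×n matrix satisfies N^n = 0. -/
lemma strict_nilpotent {n : ℕ} (N : Matrix (Fin n) (Fin n) (ZMod 2))
    (hN : N.BlockTriangular id) (hdiag : ∀ i, N i i = 0) : N ^ n = 0 := by
  have key : ∀ k : ℕ, ∀ i j : Fin n, (N ^ k) i j ≠ 0 → (i : ℕ) + k ≤ (j : ℕ) := by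
    intro k
    induction k with
    | zero =>
      intro i j hij
      simp only [pow_zero, Matrix.one_apply, ne_eq, ite_eq_right_iff, not_forall] at hij
      obtain ⟨rfl, -⟩ := hij
      omega
    | succ k ih =>
      intro i j hij
      rw [pow_succ, Matrix.mul_apply] at hij
      obtain ⟨l, hl⟩ : ∃ l, (N ^ k) i l * N l j ≠ 0 := by
        by_contra hc
        push_neg at hc
        exact hij (Finset.sum_eq_zero fun l _ => hc l)
      have h1 : (N ^ k) i l ≠ 0 := fun h0 => hl (by rw [h0, zero_mul])
      have h2 : N l j ≠ 0 := fun h0 => hl (by rw [h0, mul_zero])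
      have hlj : (l : ℕ) < (j : ℕ) := by
        rcases lt_trichotomy (l : ℕ) (j : ℕ) with h | h | h
        · exact h
        · exact absurd (Fin.ext h ▸ hdiag l) (Fin.ext h ▸ h2)
        · exact absurd (hN (show id j < id l from h)) h2
      have := ih i l h1
      omega
  ext i j
  by_contra hc
  have := key n i j (by simpa using hc)
  omega

theorem even_of_Tn_F2_m_torsion_clean (n m : ℕ) (hn : 2 < n) (hm : 2 < m)
    (h : TorsionClean (Triangular n) m) : Even m := by
  by_contra hodd
  rw [Nat.not_even_iff_odd] at hodd
  -- Every unit of Triangular n satisfies u ^ (2^n) = 1.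
  have hunit : ∀ u : Triangular n, IsUnit u → u ^ (2 ^ n) = 1 := by
    intro u hu
    set A : Matrix (Fin n) (Fin n) (ZMod 2) := (u : Matrix (Fin n) (Fin n) (ZMod 2)) with hA
    have hAt : A.BlockTriangular id := u.2
    have hAunit : IsUnit A := hu.map (Triangular n).subtype
    have hdet : A.det ≠ 0 := (Matrix.isUnit_iff_isUnit_det A).mp hAunit |>.ne_zero
    rw [Matrix.det_of_upperTriangular hAt] at hdet
    have hdiag : ∀ i, A i i = 1 := by
      intro i
      have : A i i ≠ 0 := by
        intro h0
        exact hdet (Finset.prod_eq_zero (Finset.mem_univ i) h0)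
      revert this; generalize A i i = a; revert a; decide
    -- N = A - 1 is strictly triangular
    set ν : Triangular n := u - 1 with hν
    have hνn : ν ^ n = 0 := by
      have : ((ν : Matrix (Fin n) (Fin n) (ZMod 2))) ^ n = 0 := by
        apply strict_nilpotent
        · exact ν.2
        · intro i
          have : (ν : Matrix (Fin n) (Fin n) (ZMod 2)) = A - 1 := by
            push_cast [hν]; rfl
          rw [this]
          simp [Matrix.sub_apply, hdiag i, Matrix.one_apply]
      apply Subtype.ext
      push_cast
      exact this
    have hν2n : ν ^ (2 ^ n) = 0 :=
      pow_eq_zero_of_le (Nat.le_of_lt (Nat.lt_two_pow_self (n := n))) hνn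
    have hchar : (2 : Triangular n) = 0 := by
      have h12 : (2 : Triangular n) = 1 + 1 := by norm_num
      rw [h12]
      apply Subtype.ext
      push_cast
      ext i j
      rw [Matrix.add_apply, Matrix.zero_apply]
      exact CharTwo.add_self_eq_zero _
    have hu1 : u = 1 + ν := by rw [hν]; abel
    have hsq : ∀ x : Triangular n, (1 + x) ^ 2 = 1 + x ^ 2 := by
      intro x
      have : (1 + x) ^ 2 = 1 + 2 * x + x ^ 2 := by noncomm_ring
      rw [this, hchar, zero_mul, add_zero]
    have hpow : ∀ k : ℕ, u ^ (2 ^ k) = 1 + ν ^ (2 ^ k) := by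
      intro k
      induction k with
      | zero => simpa using hu1
      | succ k ih =>
        rw [pow_succ, pow_mul, ih, hsq, ← pow_mul, ← pow_succ]
    rw [hpow n, hν2n, add_zero]
  -- m odd forces u = 1 for units with u^m = 1
  have h1 : AlmostTorsionClean (Triangular n) 1 := by
    intro r
    obtain ⟨u, e, hu, hum, he, hre⟩ := h.1 r
    refine ⟨u, e, hu, ?_, he, hre⟩
    have hd1 : orderOf u ∣ m := orderOf_dvd_of_pow_eq_one hum
    have hd2 : orderOf u ∣ 2 ^ n := orderOf_dvd_of_pow_eq_one (hunit u hu)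
    have hcop : Nat.Coprime m (2 ^ n) :=
      Nat.Coprime.pow_right n (hodd.coprime_two_right)
    have hdg : orderOf u ∣ Nat.gcd m (2 ^ n) := Nat.dvd_gcd hd1 hd2
    rw [Nat.Coprime] at hcop
    rw [hcop, Nat.dvd_one] at hdg
    rw [pow_one, orderOf_eq_one_iff.mp hdg]
  exact h.2 1 one_pos (by omega) h1
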